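/- Suppose p_{1,n} = δ_{n,0} and, for all k ≥ 2 and n ≥ 0, the coefficients satisfy p_{k,n} = Σ_{j=1}^{k−1} Σ_{ℓ=0}^{n} G_{k−j,j} p_{k−j,ℓ} p_{j,n−ℓ} + 2Σ_{j=1}^{n} Σ_{ℓ=0}^{n−j} G_{k+j,−j} p_{k+j,ℓ} p_{j,n−(j+ℓ)}. Then for every m ≥ 1 and every n ≥ 0, p_{2^m,n} = (∏_{j=0}^{m−1} (γ_{2^{m−j}})^{2^j}) δ_{n,0}. -/
import Mathlib


open Real

/-- Maxwellian kernel transform: `Γ(u) = sin(πu)/(πu)` for `u ≠ 0`, `Γ(0) = 1`. -/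
noncomputable def Gam (u : ℝ) : ℝ :=
  if u = 0 then 1 else Real.sin (π * u) / (π * u)

/-- `G_{i,j} = γ_{i+j} Γ((i-j)/2) / (1 - 2γ_{i+j}Γ((i+j)/2))`. -/
noncomputable def Gc (γ : ℤ → ℝ) (i j : ℤ) : ℝ :=
  γ (i + j) * Gam (((i : ℝ) - (j : ℝ)) / 2) / (1 - 2 * γ (i + j) * Gam (((i : ℝ) + (j : ℝ)) / 2))

lemma Gam_int (z : ℤ) (hz : z ≠ 0) : Gam (z : ℝ) = 0 := by
  unfold Gam
  rw [if_neg (by exact_mod_cast hz), mul_comm, Real.sin_int_mul_pi, zero_div]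

lemma Gc_zero (γ : ℤ → ℝ) (i j z : ℤ) (hz : z ≠ 0) (h : i - j = 2 * z) : Gc γ i j = 0 := by
  unfold Gc
  have h' : ((i : ℝ) - j) / 2 = (z : ℝ) := by
    have : (i : ℝ) - j = 2 * z := by exact_mod_cast h
    rw [this]; ring
  rw [h', Gam_int z hz, mul_zero, zero_div]

lemma Gc_diag (γ : ℤ → ℝ) (t : ℤ) (ht : t ≠ 0) : Gc γ t t = γ (2 * t) := by
  unfold Gc
  have h0 : ((t : ℝ) - t) / 2 = 0 := by ring
  have h1 : ((t : ℝ) + t) / 2 = (t : ℝ) := by ring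
  rw [h0, h1, Gam_int t ht]
  simp [Gam, two_mul]

lemma key (γ : ℤ → ℝ) (p : ℕ → ℕ → ℝ)
    (hrec : ∀ k : ℕ, 2 ≤ k → ∀ n : ℕ,
      p k n = (∑ j ∈ Finset.Ico 1 k, ∑ l ∈ Finset.range (n + 1),
          Gc γ ((k : ℤ) - (j : ℤ)) (j : ℤ) * p (k - j) l * p j (n - l))
        + 2 * ∑ j ∈ Finset.Icc 1 n, ∑ l ∈ Finset.range (n - j + 1),
            Gc γ ((k : ℤ) + (j : ℤ)) (-(j : ℤ)) * p (k + j) l * p j (n - (j + l)))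
    (t : ℕ) (ht : 1 ≤ t) (n : ℕ) :
    p (2 * t) n = γ (2 * (t : ℤ)) * ∑ l ∈ Finset.range (n + 1), p t l * p t (n - l) := by
  rw [hrec (2 * t) (by omega) n]
  have hsecond : (∑ j ∈ Finset.Icc 1 n, ∑ l ∈ Finset.range (n - j + 1),
      Gc γ (((2 * t : ℕ) : ℤ) + (j : ℤ)) (-(j : ℤ)) * p (2 * t + j) l * p j (n - (j + l))) = 0 := by
    apply Finset.sum_eq_zero; intro j hj
    apply Finset.sum_eq_zero; intro l _
    have hj1 : 1 ≤ j := (Finset.mem_Icc.mp hj).1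
    rw [Gc_zero γ _ _ ((t : ℤ) + j) (by omega) (by push_cast; ring), zero_mul, zero_mul]
  rw [hsecond, mul_zero, add_zero]
  rw [Finset.sum_eq_single_of_mem t (by rw [Finset.mem_Ico]; omega)]
  · have hc : ((2 * t : ℕ) : ℤ) - (t : ℤ) = (t : ℤ) := by push_cast; ring
    have hn : 2 * t - t = t := by omega
    rw [hc, hn, Gc_diag γ t (by omega)]
    simp only [mul_assoc]
    rw [← Finset.mul_sum]
  · intro j hj hjt
    apply Finset.sum_eq_zero; intro l _
    rw [Gc_zero γ _ _ ((t : ℤ) - j) (by omega) (by push_cast; ring), zero_mul, zero_mul]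

lemma delta_sum (n : ℕ) (C : ℝ) :
    (∑ l ∈ Finset.range (n + 1), (C * if l = 0 then 1 else 0) * (C * if n - l = 0 then 1 else 0))
      = C * C * (if n = 0 then 1 else 0) := by
  rw [Finset.sum_eq_single_of_mem 0 (Finset.mem_range.mpr (by omega))]
  · by_cases h : n = 0 <;> simp [h]
  · intro b _ hb; simp [hb]

/-- If `p_{1,n} = δ_{n,0}` and the coefficients satisfy the recursion
`p_{k,n} = Σ_{j=1}^{k-1}Σ_{ℓ=0}^{n} G_{k-j,j} p_{k-j,ℓ} p_{j,n-ℓ}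
  + 2Σ_{j=1}^{n}Σ_{ℓ=0}^{n-j} G_{k+j,-j} p_{k+j,ℓ} p_{j,n-(j+ℓ)}` for all `k ≥ 2`, `n ≥ 0`,
then `p_{2^m,n} = (∏_{j=0}^{m-1} γ_{2^{m-j}}^{2^j}) δ_{n,0}` for every `m ≥ 1` and `n ≥ 0`. -/
theorem stmt_18
    (γ : ℤ → ℝ) (p : ℕ → ℕ → ℝ)
    (hp1 : ∀ n : ℕ, p 1 n = if n = 0 then 1 else 0)
    (hrec : ∀ k : ℕ, 2 ≤ k → ∀ n : ℕ,
      p k n = (∑ j ∈ Finset.Ico 1 k, ∑ l ∈ Finset.range (n + 1),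
          Gc γ ((k : ℤ) - (j : ℤ)) (j : ℤ) * p (k - j) l * p j (n - l))
        + 2 * ∑ j ∈ Finset.Icc 1 n, ∑ l ∈ Finset.range (n - j + 1),
            Gc γ ((k : ℤ) + (j : ℤ)) (-(j : ℤ)) * p (k + j) l * p j (n - (j + l))) :
    ∀ m : ℕ, 1 ≤ m → ∀ n : ℕ,
      p (2 ^ m) n =
        (∏ j ∈ Finset.range m, (γ ((2 : ℤ) ^ (m - j))) ^ (2 ^ j)) *
          (if n = 0 then 1 else 0) := by
  intro m hm
  induction m, hm using Nat.le_induction with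
  | base =>
    intro n
    have h2 : (2 : ℕ) ^ 1 = 2 * 1 := by norm_num
    rw [h2, key γ p hrec 1 le_rfl n]
    have : ∑ l ∈ Finset.range (n + 1), p 1 l * p 1 (n - l)
        = 1 * 1 * (if n = 0 then 1 else 0) := by
      simp only [hp1]
      have := delta_sum n 1
      simpa using this
    rw [this]
    norm_num
  | succ m hm ih =>
    intro n
    have h2 : (2 : ℕ) ^ (m + 1) = 2 * 2 ^ m := by ring
    rw [h2, key γ p hrec (2 ^ m) (Nat.one_le_two_pow) n]
    set C := ∏ j ∈ Finset.range m, (γ ((2 : ℤ) ^ (m - j))) ^ (2 ^ j) with hC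
    have hsum : ∑ l ∈ Finset.range (n + 1), p (2 ^ m) l * p (2 ^ m) (n - l)
        = C * C * (if n = 0 then 1 else 0) := by
      have : ∀ l, p (2 ^ m) l = C * (if l = 0 then 1 else 0) := fun l => ih l
      simp only [this]
      exact delta_sum n C
    rw [hsum]
    have hγ : γ (2 * (Nat.cast (2 ^ m) : ℤ)) = γ ((2 : ℤ) ^ (m + 1)) := by
      congr 1; push_cast; ring
    rw [hγ]
    have hprod : ∏ j ∈ Finset.range (m + 1), (γ ((2 : ℤ) ^ (m + 1 - j))) ^ (2 ^ j)
        = γ ((2 : ℤ) ^ (m + 1)) * (C * C) := by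
      rw [Finset.prod_range_succ']
      have h1 : ∀ j ∈ Finset.range m, (γ ((2 : ℤ) ^ (m + 1 - (j + 1)))) ^ (2 ^ (j + 1))
          = (γ ((2 : ℤ) ^ (m - j))) ^ (2 ^ j) * (γ ((2 : ℤ) ^ (m - j))) ^ (2 ^ j) := by
        intro j hj
        have : m + 1 - (j + 1) = m - j := by omega
        rw [this, pow_succ, pow_mul, sq, ← pow_add]
      rw [Finset.prod_congr rfl h1, Finset.prod_mul_distrib]
      simp [hC, mul_comm]
    rw [hprod]
    ring
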